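/- Let p be a prime, K a field of characteristic p with a fixed algebraic closure K̄, and φ(X) = Σ_{i=d}^{D} c_i X^{p^i} ∈ K[X] a Drinfeld module of special characteristic (1 ≤ d ≤ D, c_d ≠ 0, c_D ≠ 0; in particular φ is inseparable). If Φ[t^∞](K^sep) is finite, then for every intermediate field K ⊆ L ⊆ K̄ with [L : K] finite, the set Φ[t^∞](L^sep) is also finite, where L^sep denotes the separable closure of L in K̄. -/
import Mathlib

set_option maxHeartbeats 1000000
set_option synthInstance.maxHeartbeats 400000


/-- The `𝔽_p`-linear map `T_φ` induced by the additive polynomial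
`φ(X) = Σ_{i=d}^{D} c_i X^{p^i}` of a Drinfeld module of special characteristic. -/
noncomputable def specialTphi {L : Type*} [Field L] (p d D : ℕ) (c : ℕ → L) : L → L :=
  fun x => ∑ i ∈ Finset.Icc d D, c i * x ^ (p ^ i)

open IntermediateField Polynomial in
/-- Fibers of `specialTphi` are finite. -/
lemma specialTphi_fiber_finite {E : Type*} [Field E] {p d D : ℕ} (hp : 2 ≤ p)
    (hd : 1 ≤ d) (hdD : d ≤ D) (c : ℕ → E) (hcD : c D ≠ 0) (y : E) :
    {x : E | specialTphi p d D c x = y}.Finite := by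
  classical
  set P : E[X] := (∑ i ∈ Finset.Icc d D, Polynomial.C (c i) * Polynomial.X ^ (p ^ i))
    - Polynomial.C y with hP
  have h1 : (∑ i ∈ Finset.Icc d D,
      Polynomial.C (c i) * Polynomial.X ^ (p ^ i)).coeff (p ^ D) = c D := by
    rw [Polynomial.finset_sum_coeff, Finset.sum_eq_single D]
    · simp [Polynomial.coeff_C_mul, Polynomial.coeff_X_pow]
    · intro i hi hne
      have hne' : p ^ D ≠ p ^ i := fun h => hne (Nat.pow_right_injective hp h.symm)
      simp [Polynomial.coeff_C_mul, Polynomial.coeff_X_pow, hne']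
    · intro h
      exact absurd (Finset.mem_Icc.2 ⟨hdD, le_refl D⟩) h
  have hcoeff : P.coeff (p ^ D) = c D := by
    have h2 : (Polynomial.C y).coeff (p ^ D) = 0 := by
      rw [Polynomial.coeff_C, if_neg (pow_ne_zero D (by omega))]
    rw [hP, Polynomial.coeff_sub, h1, h2, sub_zero]
  have hPne : P ≠ 0 := by
    intro h
    rw [h, Polynomial.coeff_zero] at hcoeff
    exact hcD hcoeff.symm
  refine (Polynomial.finite_setOf_isRoot hPne).subset ?_
  intro x hx
  simp only [Set.mem_setOf_eq] at hx ⊢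
  have heval : P.eval x = specialTphi p d D c x - y := by
    simp [hP, Polynomial.eval_finset_sum, specialTphi]
  show P.IsRoot x
  rw [Polynomial.IsRoot, heval, hx, sub_self]

/-- Preimages of finite sets under iterates of a finite-fiber map are finite. -/
lemma iterate_preimage_finite {E : Type*} {f : E → E}
    (hf : ∀ y : E, {x : E | f x = y}.Finite) :
    ∀ (k : ℕ) {S : Set E}, S.Finite → (f^[k] ⁻¹' S).Finite
  | 0, S, hS => by simpa using hS
  | (k+1), S, hS => by
    rw [Function.iterate_succ, Set.preimage_comp, ← Set.biUnion_preimage_singleton]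
    exact (iterate_preimage_finite hf k hS).biUnion fun y _ => (hf y).subset (by
      intro x hx; exact hx)

open IntermediateField in
/-- Uniform inseparable exponent: everything separable over a finite extension `L` of `K`
has some fixed `p^m`-th power in the separable closure of `K`. -/
lemma sep_pow_uniform {K : Type*} [Field K] (p : ℕ) [Fact p.Prime] [CharP K p]
    (L : IntermediateField K (AlgebraicClosure K)) [FiniteDimensional K ↥L] :
    ∃ m : ℕ, ∀ x : AlgebraicClosure K, x ∈ separableClosure ↥L (AlgebraicClosure K) →
      x ^ p ^ m ∈ separableClosure K (AlgebraicClosure K) := by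
  classical
  set E := AlgebraicClosure K with hE
  haveI : CharP E p := charP_of_injective_algebraMap (algebraMap K E).injective p
  haveI : ExpChar E p := ExpChar.prime Fact.out
  set Ks := separableClosure K E with hKs
  have hPI : ∀ x : E, ∃ n, x ^ p ^ n ∈ Ks := by
    intro x
    haveI : CharP ↥Ks p := charP_of_injective_algebraMap (algebraMap K ↥Ks).injective p
    haveI : ExpChar ↥Ks p := ExpChar.prime Fact.out
    obtain ⟨n, hn⟩ := IsPurelyInseparable.pow_mem ↥Ks p x
    obtain ⟨z, hz⟩ := hn
    exact ⟨n, hz ▸ z.2⟩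
  have hmono : ∀ (x : E) (k j : ℕ), k ≤ j → x ^ p ^ k ∈ Ks → x ^ p ^ j ∈ Ks := by
    intro x k j hkj hx
    obtain ⟨j', rfl⟩ := Nat.exists_eq_add_of_le hkj
    rw [pow_add, pow_mul]
    exact pow_mem hx _
  let b := Module.finBasis K ↥L
  choose n hn using fun i => hPI (algebraMap ↥L E (b i))
  set m := Finset.univ.sup n with hm
  have hL : ∀ a : ↥L, (algebraMap ↥L E a) ^ p ^ m ∈ Ks := by
    intro a
    have hrepr : (algebraMap ↥L E a) = ∑ i, b.repr a i • (algebraMap ↥L E (b i)) := by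
      conv_lhs => rw [← b.sum_repr a]
      rw [map_sum]
      exact Finset.sum_congr rfl fun i _ => by
        rw [Algebra.smul_def, Algebra.smul_def, map_mul, ← IsScalarTower.algebraMap_apply]
    rw [hrepr, ← iterateFrobenius_def (R := E) (p := p), map_sum]
    refine sum_mem fun i _ => ?_
    rw [iterateFrobenius_def, Algebra.smul_def, mul_pow]
    exact mul_mem (pow_mem (IntermediateField.algebraMap_mem Ks _) _)
      (hmono _ _ _ (Finset.le_sup (Finset.mem_univ i)) (hn i))
  set M' := IntermediateField.adjoin ↥L ((Ks : Set E)) with hM'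
  haveI : CharP ↥L p := charP_of_injective_algebraMap (algebraMap K ↥L).injective p
  haveI : CharP ↥M' p := charP_of_injective_algebraMap (algebraMap ↥L ↥M').injective p
  haveI : ExpChar ↥M' p := ExpChar.prime Fact.out
  haveI : IsPurelyInseparable ↥M' E := by
    rw [isPurelyInseparable_iff_pow_mem ↥M' p]
    intro x
    obtain ⟨k, hk⟩ := hPI x
    exact ⟨k, ⟨⟨x ^ p ^ k, IntermediateField.subset_adjoin _ _ hk⟩, rfl⟩⟩
  refine ⟨m, fun x hx => ?_⟩
  have hxM : x ∈ M' := separableClosure_le ↥L E M' hx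
  refine IntermediateField.adjoin_induction (F := ↥L) (p := fun y _ => y ^ p ^ m ∈ Ks) ?_ ?_ ?_ ?_ ?_ hxM
  · intro y hy
    exact pow_mem hy _
  · intro a
    exact hL a
  · intro u v _ _ pu pv
    rw [add_pow_char_pow]
    exact add_mem pu pv
  · intro u _ pu
    rw [inv_pow]
    exact inv_mem pu
  · intro u v _ _ pu pv
    rw [mul_pow]
    exact mul_mem pu pv

/-- Let `φ` be a Drinfeld module of special characteristic over a field `K`
of characteristic `p`, with a fixed algebraic closure `K̄`.  If `Φ[t^∞](K^sep)` is finite,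
then for every intermediate field `K ⊆ L ⊆ K̄` with `[L : K]` finite, the set
`Φ[t^∞](L^sep)` is also finite, where `L^sep` is the separable closure of `L` in `K̄`. -/
theorem stmt9 {K : Type*} [Field K] (p : ℕ) [Fact p.Prime] [CharP K p]
    (d D : ℕ) (hd : 1 ≤ d) (hdD : d ≤ D) (c : ℕ → K)
    (hcd : c d ≠ 0) (hcD : c D ≠ 0)
    -- `Φ[t^∞](K^sep)` is finite:
    (htor : {x : AlgebraicClosure K | x ∈ separableClosure K (AlgebraicClosure K) ∧
      ∃ n : ℕ, (specialTphi p d D (fun i => algebraMap K (AlgebraicClosure K) (c i)))^[n] x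
        = 0}.Finite)
    (L : IntermediateField K (AlgebraicClosure K)) [FiniteDimensional K ↥L] :
    {x : AlgebraicClosure K | x ∈ separableClosure ↥L (AlgebraicClosure K) ∧
      ∃ n : ℕ, (specialTphi p d D (fun i => algebraMap K (AlgebraicClosure K) (c i)))^[n] x
        = 0}.Finite := by
  classical
  have hp2 : 2 ≤ p := (Fact.out : p.Prime).two_le
  set c' : ℕ → AlgebraicClosure K := fun i => algebraMap K (AlgebraicClosure K) (c i) with hc'
  set f : AlgebraicClosure K → AlgebraicClosure K := specialTphi p d D c' with hf
  haveI : CharP (AlgebraicClosure K) p :=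
    charP_of_injective_algebraMap (algebraMap K (AlgebraicClosure K)).injective p
  haveI : ExpChar (AlgebraicClosure K) p := ExpChar.prime Fact.out
  obtain ⟨m, hm⟩ := sep_pow_uniform p L
  set Ks := separableClosure K (AlgebraicClosure K) with hKs
  have hf0 : f 0 = 0 := by
    rw [hf]
    refine Finset.sum_eq_zero fun i _ => ?_
    rw [zero_pow (pow_ne_zero i (by omega : p ≠ 0)), mul_zero]
  have hstep : ∀ (x : AlgebraicClosure K) (k : ℕ),
      x ^ p ^ (k + 1) ∈ Ks → (f x) ^ p ^ k ∈ Ks := by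
    intro x k hx
    rw [hf]
    show (∑ i ∈ Finset.Icc d D, c' i * x ^ (p ^ i)) ^ p ^ k ∈ Ks
    rw [← iterateFrobenius_def (p := p), map_sum]
    refine sum_mem fun i hi => ?_
    obtain ⟨i', rfl⟩ : ∃ i', i = i' + 1 := by
      have := (Finset.mem_Icc.1 hi).1
      exact ⟨i - 1, by omega⟩
    have hexp : p ^ (i' + 1) * p ^ k = p ^ (k + 1) * p ^ i' := by
      rw [← pow_add, ← pow_add]
      congr 1
      omega
    rw [iterateFrobenius_def, mul_pow, ← pow_mul, hexp, pow_mul]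
    exact mul_mem (pow_mem (IntermediateField.algebraMap_mem Ks _) _) (pow_mem hx _)
  have horb : ∀ (k : ℕ) (x : AlgebraicClosure K), x ^ p ^ k ∈ Ks → f^[k] x ∈ Ks := by
    intro k
    induction k with
    | zero => intro x hx; simpa using hx
    | succ k ih =>
      intro x hx
      rw [Function.iterate_succ_apply]
      exact ih (f x) (hstep x k hx)
  have hcD' : c' D ≠ 0 := fun h =>
    hcD ((algebraMap K (AlgebraicClosure K)).injective (h.trans (map_zero _).symm))
  have hfib : ∀ y, {x : AlgebraicClosure K | f x = y}.Finite :=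
    fun y => specialTphi_fiber_finite hp2 hd hdD c' hcD' y
  have hsub : {x : AlgebraicClosure K | x ∈ separableClosure ↥L (AlgebraicClosure K) ∧
      ∃ n : ℕ, f^[n] x = 0} ⊆
      f^[m] ⁻¹' {x : AlgebraicClosure K | x ∈ Ks ∧ ∃ n : ℕ, f^[n] x = 0} := by
    rintro x ⟨hxs, n, hxn⟩
    refine ⟨horb m x (hm x hxs), n, ?_⟩
    rw [← Function.iterate_add_apply, add_comm, Function.iterate_add_apply, hxn]
    exact Function.iterate_fixed hf0 m
  exact (iterate_preimage_finite hfib m htor).subset hsub
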